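/- Let n ∈ ℕ, n ≥ 1, let η : Fin n → Fin n → ℝ, let B : Fin n → Fin n → Fin n → ℝ satisfy ∑_{i} B i h k = 1 for all h, k, let μ : Fin n → Fin n → ℝ → ℝ and λ : Fin n → ℝ → ℝ, and suppose f : ℝ → (Fin n → ℝ) is differentiable on an interval [0, t₀] and satisfies for all t ∈ [0, t₀] and all i the kinetic equation (f i)'(t) = ∑_{h,k} η h k · B i h k · f h t · f k t − f i t · ∑_{k} η i k · f k t + f i t · ∑_{k} η i k · μ i k t · f k t + λ i t · f i t. Then the total density ρ(t) = ∑_{i} f i t satisfies, for all t ∈ [0, t₀], ρ'(t) = ∑_{i} f i t · ( ∑_{k} η i k · μ i k t · f k t + λ i t ). -/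

import Mathlib

open Set

/-- Evolution equation for the total density ρ(t) = ∑ i, f i t:
ρ'(t) = ∑_i f_i(t) (∑_k η_{ik} μ_{ik}(t) f_k(t) + λ_i(t)). -/
theorem stmt_7 (n : ℕ) (hn : 1 ≤ n) (t₀ : ℝ)
    (η : Fin n → Fin n → ℝ) (B : Fin n → Fin n → Fin n → ℝ)
    (hBsum : ∀ h k, ∑ i, B i h k = 1)
    (μ : Fin n → Fin n → ℝ → ℝ) (lam : Fin n → ℝ → ℝ)
    (f : ℝ → Fin n → ℝ)
    (hf : ∀ t ∈ Icc (0:ℝ) t₀, ∀ i,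
      HasDerivWithinAt (fun s => f s i)
        ((∑ h, ∑ k, η h k * B i h k * f t h * f t k)
          - f t i * (∑ k, η i k * f t k)
          + f t i * (∑ k, η i k * μ i k t * f t k)
          + lam i t * f t i) (Icc (0:ℝ) t₀) t) :
    ∀ t ∈ Icc (0:ℝ) t₀,
      HasDerivWithinAt (fun s => ∑ i, f s i)
        (∑ i, f t i * ((∑ k, η i k * μ i k t * f t k) + lam i t))
        (Icc (0:ℝ) t₀) t := by
  intro t ht
  have hsum := HasDerivWithinAt.fun_sum (fun i (_ : i ∈ Finset.univ) => hf t ht i)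
  convert hsum using 1
  · rfl
  · rfl
  have key : (∑ i, ∑ h, ∑ k, η h k * B i h k * f t h * f t k)
      = ∑ i, f t i * (∑ k, η i k * f t k) := by
    rw [Finset.sum_comm]
    simp only [Finset.mul_sum]
    congr 1; ext h
    rw [Finset.sum_comm]
    congr 1; ext k
    rw [← Finset.sum_mul, ← Finset.sum_mul]
    have : (∑ i, η h k * B i h k) = η h k := by
      rw [← Finset.mul_sum, hBsum, mul_one]
    rw [this]
    ring
  rw [Finset.sum_add_distrib, Finset.sum_add_distrib, Finset.sum_sub_distrib, key]
  ring_nf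
  rw [Finset.sum_add_distrib]
  exact congrArg₂ _ rfl (Finset.sum_congr rfl fun i _ => mul_comm _ _)
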